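/- Let N ≥ 1, let a, b : ℝ → ℝ be functions, σ ∈ ℝ, let x_1 < … < x_N be real numbers and β ∈ ℝ^N. Then (x, β) satisfies the stationary Gauss–Galerkin equations with drift a, diffusion b and parameter σ if and only if Σ_{k=1}^N β_k [ a(x_k) φ'(x_k) + (σ²/2) b(x_k)² φ''(x_k) ] = 0 for every real polynomial φ of degree at most 2N − 1 (i.e. the N-point measure Σ_k β_k δ_{x_k} annihilates the generator applied to every polynomial of degree at most 2N − 1). -/

import Mathlib

open Finset

/-- `l'_{ii} = ∑_{k≠i} 1/(x_i − x_k)`, the derivative of the `i`-th Lagrange basis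
polynomial at its own node. -/
noncomputable def lpDiag {N : ℕ} (x : Fin N → ℝ) (i : Fin N) : ℝ :=
  ∑ k ∈ Finset.univ.erase i, 1 / (x i - x k)

/-- `l'_{ij} = (∏_{k≠j}(x_j − x_k)) / ((x_j − x_i)·∏_{k≠i}(x_i − x_k))` for `j ≠ i`,
the derivative of the `i`-th Lagrange basis polynomial at the node `x_j`. -/
noncomputable def lpOff {N : ℕ} (x : Fin N → ℝ) (i j : Fin N) : ℝ :=
  (∏ k ∈ Finset.univ.erase j, (x j - x k)) /
    ((x j - x i) * ∏ k ∈ Finset.univ.erase i, (x i - x k))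

/-- `l''_{ii} = (∑_{k≠i} 1/(x_i − x_k))² − ∑_{k≠i} 1/(x_i − x_k)²`, the second derivative
of the `i`-th Lagrange basis polynomial at its own node. -/
noncomputable def lppDiag {N : ℕ} (x : Fin N → ℝ) (i : Fin N) : ℝ :=
  (∑ k ∈ Finset.univ.erase i, 1 / (x i - x k)) ^ 2 -
    ∑ k ∈ Finset.univ.erase i, 1 / (x i - x k) ^ 2

/-- Right-hand side of the Gauss–Galerkin node equation (the `x`-equation):
`β_i A_i + σ²(2 β_i b(x_i)² l'_{ii} + ∑_{j≠i} β_j b(x_j)² (x_j − x_i)(l'_{ij})²)`,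
where `A_i` is the drift value at node `i` (possibly configuration dependent). -/
noncomputable def ggDriftRHS {N : ℕ} (A : Fin N → ℝ) (b : ℝ → ℝ) (σ : ℝ)
    (x β : Fin N → ℝ) (i : Fin N) : ℝ :=
  β i * A i + σ ^ 2 * (2 * β i * (b (x i)) ^ 2 * lpDiag x i +
    ∑ j ∈ Finset.univ.erase i, β j * (b (x j)) ^ 2 * (x j - x i) * (lpOff x i j) ^ 2)

/-- Right-hand side of the Gauss–Galerkin weight equation (the `β`-equation):
`2 β_i A_i l'_{ii} + σ²(β_i b(x_i)²((l'_{ii})² + l''_{ii}) + ∑_{j≠i} β_j b(x_j)²(l'_{ij})²)`. -/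
noncomputable def ggWeightRHS {N : ℕ} (A : Fin N → ℝ) (b : ℝ → ℝ) (σ : ℝ)
    (x β : Fin N → ℝ) (i : Fin N) : ℝ :=
  2 * β i * A i * lpDiag x i +
    σ ^ 2 * (β i * (b (x i)) ^ 2 * ((lpDiag x i) ^ 2 + lppDiag x i) +
      ∑ j ∈ Finset.univ.erase i, β j * (b (x j)) ^ 2 * (lpOff x i j) ^ 2)

/-- The stationary Gauss–Galerkin equations with node-dependent drift values `A_i`. -/
def StationaryGGWithDrift {N : ℕ} (A : Fin N → ℝ) (b : ℝ → ℝ) (σ : ℝ)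
    (x β : Fin N → ℝ) : Prop :=
  ∀ i, 0 = ggDriftRHS A b σ x β i ∧ 0 = ggWeightRHS A b σ x β i

/-- The stationary Gauss–Galerkin equations with drift `a : ℝ → ℝ`,
diffusion `b : ℝ → ℝ` and parameter `σ`. -/
def StationaryGG {N : ℕ} (a b : ℝ → ℝ) (σ : ℝ) (x β : Fin N → ℝ) : Prop :=
  StationaryGGWithDrift (fun i => a (x i)) b σ x β

open Polynomial

namespace GG
variable {N : ℕ} {x : Fin N → ℝ}


noncomputable def w (x : Fin N → ℝ) (i : Fin N) : ℝ := ∏ k ∈ univ.erase i, (x i - x k)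

noncomputable def lag (x : Fin N → ℝ) (i : Fin N) : ℝ[X] :=
  C (w x i)⁻¹ * Lagrange.nodal (univ.erase i) x

variable (hinj : Function.Injective x)
include hinj

theorem sub_ne {i j : Fin N} (h : i ≠ j) : x i - x j ≠ 0 :=
  sub_ne_zero.2 fun hc => h (hinj hc)

theorem w_ne (i : Fin N) : w x i ≠ 0 :=
  Finset.prod_ne_zero_iff.2 fun k hk => sub_ne hinj (Finset.ne_of_mem_erase hk).symm

theorem lag_eval_self (i : Fin N) : (lag x i).eval (x i) = 1 := by
  simp [lag, Lagrange.eval_nodal, w, inv_mul_cancel₀ (w_ne hinj i)]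
  exact inv_mul_cancel₀ (w_ne hinj i)

omit hinj in
theorem lag_eval_other {i j : Fin N} (h : j ≠ i) : (lag x i).eval (x j) = 0 := by
  simp only [lag, eval_mul, eval_C, Lagrange.eval_nodal]
  rw [Finset.prod_eq_zero (Finset.mem_erase.2 ⟨h, mem_univ j⟩) (by ring)]
  ring

theorem lag_deriv_self (i : Fin N) : (derivative (lag x i)).eval (x i) = lpDiag x i := by
  rw [lag, derivative_C_mul, eval_mul, eval_C, Lagrange.derivative_nodal, eval_finset_sum]
  have : ∀ m ∈ univ.erase i, (Lagrange.nodal ((univ.erase i).erase m) x).eval (x i)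
      = w x i * (1 / (x i - x m)) := by
    intro m hm
    rw [Lagrange.eval_nodal]
    have := Finset.mul_prod_erase (univ.erase i) (fun k => x i - x k) hm
    rw [w]
    field_simp [sub_ne hinj (Finset.ne_of_mem_erase hm).symm]
    linear_combination this
  rw [Finset.sum_congr rfl this, ← Finset.mul_sum]
  rw [← mul_assoc, inv_mul_cancel₀ (w_ne hinj i), one_mul, lpDiag]

theorem lag_deriv_other {i j : Fin N} (h : j ≠ i) :
    (derivative (lag x i)).eval (x j) = lpOff x i j := by
  rw [lag, derivative_C_mul, eval_mul, eval_C, Lagrange.derivative_nodal, eval_finset_sum]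
  have hj : j ∈ univ.erase i := Finset.mem_erase.2 ⟨h, mem_univ j⟩
  rw [← Finset.add_sum_erase _ _ hj]
  have h0 : ∀ m ∈ (univ.erase i).erase j,
      (Lagrange.nodal ((univ.erase i).erase m) x).eval (x j) = 0 := by
    intro m hm
    rw [Lagrange.eval_nodal]
    exact Finset.prod_eq_zero (Finset.mem_erase.2 ⟨(Finset.ne_of_mem_erase hm).symm, hj⟩) (by ring)
  rw [Finset.sum_eq_zero h0, add_zero, Lagrange.eval_nodal, lpOff]
  have hi : i ∈ univ.erase j := Finset.mem_erase.2 ⟨h.symm, mem_univ i⟩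
  have hcomm : (univ.erase j).erase i = (univ.erase i).erase j := by
    ext k; simp [and_left_comm, and_comm]
  have key := Finset.mul_prod_erase (univ.erase j) (fun k => x j - x k) hi
  rw [hcomm] at key
  rw [← key, w]
  rw [mul_div_mul_left _ _ (sub_ne hinj h), div_eq_mul_inv, mul_comm]


omit hinj in
theorem sum_sq_identity (f : Fin N → ℝ) (s : Finset (Fin N)) :
    ∑ m ∈ s, ∑ n ∈ s.erase m, f m * f n = (∑ m ∈ s, f m) ^ 2 - ∑ m ∈ s, (f m) ^ 2 := by
  have h : ∀ m ∈ s, ∑ n ∈ s.erase m, f m * f n = (∑ n ∈ s, f m * f n) - f m ^ 2 := by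
    intro m hm
    rw [Finset.sum_erase_eq_sub hm, sq]
  rw [Finset.sum_congr rfl h, Finset.sum_sub_distrib, sq, Finset.sum_mul_sum]

theorem lag_deriv2_self (i : Fin N) :
    (derivative (derivative (lag x i))).eval (x i) = lppDiag x i := by
  rw [lag, derivative_C_mul, derivative_C_mul, eval_mul, eval_C, Lagrange.derivative_nodal,
    derivative_sum, eval_finset_sum]
  have h : ∀ m ∈ univ.erase i,
      (derivative (Lagrange.nodal ((univ.erase i).erase m) x)).eval (x i)
        = ∑ n ∈ (univ.erase i).erase m, w x i * ((1 / (x i - x m)) * (1 / (x i - x n))) := by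
    intro m hm
    rw [Lagrange.derivative_nodal, eval_finset_sum]
    refine Finset.sum_congr rfl fun n hn => ?_
    have hn' : n ∈ univ.erase i := Finset.mem_of_mem_erase hn
    rw [Lagrange.eval_nodal]
    have key1 := Finset.mul_prod_erase (univ.erase i) (fun k => x i - x k) hm
    have key2 := Finset.mul_prod_erase ((univ.erase i).erase m) (fun k => x i - x k) hn
    rw [w, ← key1, ← key2]
    field_simp [sub_ne hinj (Finset.ne_of_mem_erase hm).symm,
      sub_ne hinj (Finset.ne_of_mem_erase hn').symm]
  rw [Finset.sum_congr rfl h]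
  simp_rw [← Finset.mul_sum]
  rw [← mul_assoc, inv_mul_cancel₀ (w_ne hinj i), one_mul]
  simp_rw [Finset.mul_sum]
  rw [sum_sq_identity, lppDiag]
  congr 1
  refine Finset.sum_congr rfl fun m _ => ?_
  rw [div_pow, one_pow]


-- squared Lagrange basis lemmas
theorem sq_eval_self (i : Fin N) : ((lag x i) ^ 2).eval (x i) = 1 := by
  simp [lag_eval_self hinj]

omit hinj in
theorem sq_eval_other {i j : Fin N} (h : j ≠ i) : ((lag x i) ^ 2).eval (x j) = 0 := by
  simp [lag_eval_other h]

theorem sq_deriv_eval_self (i : Fin N) :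
    (derivative ((lag x i) ^ 2)).eval (x i) = 2 * lpDiag x i := by
  rw [derivative_sq]
  simp [lag_eval_self hinj, lag_deriv_self hinj]

omit hinj in
theorem sq_deriv_eval_other {i j : Fin N} (h : j ≠ i) :
    (derivative ((lag x i) ^ 2)).eval (x j) = 0 := by
  rw [derivative_sq]
  simp [lag_eval_other h]

theorem sq_deriv2_eval_self (i : Fin N) :
    (derivative (derivative ((lag x i) ^ 2))).eval (x i)
      = 2 * (lpDiag x i) ^ 2 + 2 * lppDiag x i := by
  rw [derivative_sq, derivative_mul, derivative_mul, derivative_C]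
  simp [lag_eval_self hinj, lag_deriv_self hinj, lag_deriv2_self hinj]
  ring

theorem sq_deriv2_eval_other {i j : Fin N} (h : j ≠ i) :
    (derivative (derivative ((lag x i) ^ 2))).eval (x j) = 2 * (lpOff x i j) ^ 2 := by
  rw [derivative_sq, derivative_mul, derivative_mul, derivative_C]
  simp [lag_eval_other h, lag_deriv_other hinj h]
  ring

-- the Hermite-type polynomial K i = (X - x i) * l_i^2
omit hinj in
theorem K_eval (i j : Fin N) : ((X - C (x i)) * (lag x i) ^ 2).eval (x j) = 0 := by
  by_cases h : j = i
  · subst h; simp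
  · simp [sq_eval_other h]

theorem K_deriv_eval_self (i : Fin N) :
    (derivative ((X - C (x i)) * (lag x i) ^ 2)).eval (x i) = 1 := by
  rw [derivative_mul]
  simp [sq_eval_self hinj, sq_deriv_eval_self hinj]

theorem K_deriv_eval_other {i j : Fin N} (h : j ≠ i) :
    (derivative ((X - C (x i)) * (lag x i) ^ 2)).eval (x j) = 0 := by
  rw [derivative_mul]
  simp [sq_eval_other h, sq_deriv_eval_other h]

theorem K_deriv2_eval_self (i : Fin N) :
    (derivative (derivative ((X - C (x i)) * (lag x i) ^ 2))).eval (x i)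
      = 4 * lpDiag x i := by
  rw [derivative_mul, derivative_add, derivative_mul]
  simp [sq_deriv_eval_self hinj]
  ring

theorem K_deriv2_eval_other {i j : Fin N} (h : j ≠ i) :
    (derivative (derivative ((X - C (x i)) * (lag x i) ^ 2))).eval (x j)
      = 2 * (x j - x i) * (lpOff x i j) ^ 2 := by
  rw [derivative_mul, derivative_add, derivative_mul]
  simp [sq_deriv_eval_other h, sq_deriv2_eval_other hinj h]
  ring




noncomputable def Lf (a b : ℝ → ℝ) (σ : ℝ) (x β : Fin N → ℝ) (φ : ℝ[X]) : ℝ :=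
  ∑ k, β k * (a (x k) * (derivative φ).eval (x k) +
    σ ^ 2 / 2 * (b (x k)) ^ 2 * (derivative (derivative φ)).eval (x k))

theorem Lf_K (a b : ℝ → ℝ) (σ : ℝ) (β : Fin N → ℝ) (i : Fin N) :
    Lf a b σ x β ((X - C (x i)) * (lag x i) ^ 2)
      = ggDriftRHS (fun i => a (x i)) b σ x β i := by
  rw [Lf, ← Finset.add_sum_erase univ _ (mem_univ i), K_deriv_eval_self hinj,
    K_deriv2_eval_self hinj,
    Finset.sum_congr rfl (fun j hj => by
      rw [K_deriv_eval_other hinj (Finset.ne_of_mem_erase hj),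
        K_deriv2_eval_other hinj (Finset.ne_of_mem_erase hj)]),
    ggDriftRHS,
    Finset.sum_congr rfl (fun j hj =>
      show β j * (a (x j) * 0 + σ ^ 2 / 2 * (b (x j)) ^ 2 *
          (2 * (x j - x i) * (lpOff x i j) ^ 2))
        = σ ^ 2 * (β j * (b (x j)) ^ 2 * (x j - x i) * (lpOff x i j) ^ 2) from by ring),
    ← Finset.mul_sum]
  ring

theorem Lf_sq (a b : ℝ → ℝ) (σ : ℝ) (β : Fin N → ℝ) (i : Fin N) :
    Lf a b σ x β ((lag x i) ^ 2) = ggWeightRHS (fun i => a (x i)) b σ x β i := by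
  rw [Lf, ← Finset.add_sum_erase univ _ (mem_univ i), sq_deriv_eval_self hinj,
    sq_deriv2_eval_self hinj,
    Finset.sum_congr rfl (fun j hj => by
      rw [sq_deriv_eval_other (Finset.ne_of_mem_erase hj),
        sq_deriv2_eval_other hinj (Finset.ne_of_mem_erase hj)]),
    ggWeightRHS,
    Finset.sum_congr rfl (fun j hj =>
      show β j * (a (x j) * 0 + σ ^ 2 / 2 * (b (x j)) ^ 2 * (2 * (lpOff x i j) ^ 2))
        = σ ^ 2 * (β j * (b (x j)) ^ 2 * (lpOff x i j) ^ 2) from by ring),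
    ← Finset.mul_sum]
  ring

omit hinj in
theorem Lf_zero (a b : ℝ → ℝ) (σ : ℝ) (β : Fin N → ℝ) : Lf a b σ x β 0 = 0 := by
  simp [Lf]

omit hinj in
theorem Lf_add (a b : ℝ → ℝ) (σ : ℝ) (β : Fin N → ℝ) (p q : ℝ[X]) :
    Lf a b σ x β (p + q) = Lf a b σ x β p + Lf a b σ x β q := by
  simp only [Lf, derivative_add, eval_add, ← Finset.sum_add_distrib]
  exact Finset.sum_congr rfl fun k _ => by ring

omit hinj in
theorem Lf_sub (a b : ℝ → ℝ) (σ : ℝ) (β : Fin N → ℝ) (p q : ℝ[X]) :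
    Lf a b σ x β (p - q) = Lf a b σ x β p - Lf a b σ x β q := by
  simp only [Lf, derivative_sub, eval_sub, ← Finset.sum_sub_distrib]
  exact Finset.sum_congr rfl fun k _ => by ring

omit hinj in
theorem Lf_Cmul (a b : ℝ → ℝ) (σ : ℝ) (β : Fin N → ℝ) (c : ℝ) (p : ℝ[X]) :
    Lf a b σ x β (C c * p) = c * Lf a b σ x β p := by
  simp only [Lf, derivative_C_mul, eval_mul, eval_C, Finset.mul_sum]
  exact Finset.sum_congr rfl fun k _ => by ring

omit hinj in
theorem Lf_finsum (a b : ℝ → ℝ) (σ : ℝ) (β : Fin N → ℝ) {ι : Type*} (s : Finset ι)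
    (p : ι → ℝ[X]) : Lf a b σ x β (∑ i ∈ s, p i) = ∑ i ∈ s, Lf a b σ x β (p i) := by
  classical
  induction s using Finset.induction_on with
  | empty => simp [Lf_zero]
  | insert _ _ hi ih => rw [Finset.sum_insert hi, Finset.sum_insert hi, Lf_add, ih]

omit hinj in
theorem Lf_sum (a b : ℝ → ℝ) (σ : ℝ) (β : Fin N → ℝ) (c : Fin N → ℝ) (p : Fin N → ℝ[X]) :
    Lf a b σ x β (∑ i, C (c i) * p i) = ∑ i, c i * Lf a b σ x β (p i) := by
  rw [Lf_finsum]
  exact Finset.sum_congr rfl fun i _ => Lf_Cmul _ _ _ _ _ _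

omit hinj in
theorem natDegree_lag_le (i : Fin N) : (lag x i).natDegree ≤ N - 1 := by
  refine le_trans (natDegree_C_mul_le _ _) ?_
  rw [Lagrange.natDegree_nodal]
  simp [Finset.card_erase_of_mem]

omit hinj in
theorem natDegree_sq_le (i : Fin N) : ((lag x i) ^ 2).natDegree ≤ 2 * N - 2 := by
  refine le_trans (natDegree_pow_le) ?_
  have := natDegree_lag_le (x := x) i
  omega

omit hinj in
theorem natDegree_K_le (i : Fin N) :
    ((X - C (x i)) * (lag x i) ^ 2).natDegree ≤ 2 * N - 1 := by
  refine le_trans (natDegree_mul_le) ?_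
  have h1 : (X - C (x i)).natDegree = 1 := natDegree_X_sub_C _
  have h2 := natDegree_sq_le (x := x) i
  have hN : 1 ≤ N := i.pos
  omega

theorem vanish (hN : 1 ≤ N) {r : ℝ[X]} (hdeg : r.natDegree ≤ 2 * N - 1)
    (h0 : ∀ i, r.eval (x i) = 0) (h1 : ∀ i, (derivative r).eval (x i) = 0) : r = 0 := by
  by_contra hr
  have hdvd : ∀ i : Fin N, (X - C (x i)) ^ 2 ∣ r := by
    intro i
    obtain ⟨s, hs⟩ := dvd_iff_isRoot.2 (h0 i)
    have hs0 : s.eval (x i) = 0 := by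
      have h := h1 i
      rw [hs, derivative_mul] at h
      simpa using h
    obtain ⟨t, ht⟩ := dvd_iff_isRoot.2 hs0
    exact ⟨t, by rw [hs, ht]; ring⟩
  have hcop : ((univ : Finset (Fin N)) : Set (Fin N)).Pairwise
      (Function.onFun IsCoprime fun i => (X - C (x i)) ^ 2) := by
    intro i _ j _ hij
    exact (Polynomial.pairwise_coprime_X_sub_C hinj hij).pow
  have hprod : (∏ i : Fin N, (X - C (x i)) ^ 2) ∣ r :=
    Finset.prod_dvd_of_coprime hcop fun i _ => hdvd i
  have hdp : (∏ i : Fin N, (X - C (x i)) ^ 2).natDegree = 2 * N := by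
    rw [natDegree_prod _ _ (fun i _ => pow_ne_zero _ (X_sub_C_ne_zero _))]
    simp [natDegree_pow, mul_comm]
  have hle := Polynomial.natDegree_le_of_dvd hprod hr
  omega


theorem hermite (hN : 1 ≤ N) (φ : ℝ[X]) (hdeg : φ.natDegree ≤ 2 * N - 1) :
    φ = (∑ i, C (φ.eval (x i)) *
          ((lag x i) ^ 2 - C (2 * lpDiag x i) * ((X - C (x i)) * (lag x i) ^ 2)))
        + ∑ i, C ((derivative φ).eval (x i)) * ((X - C (x i)) * (lag x i) ^ 2) := by
  rw [← sub_eq_zero]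
  refine vanish hinj hN ?_ ?_ ?_
  · refine le_trans (natDegree_sub_le _ _) (max_le hdeg ?_)
    refine le_trans (natDegree_add_le _ _) (max_le ?_ ?_)
    · refine natDegree_sum_le_of_forall_le _ _ fun i _ => ?_
      refine le_trans (natDegree_C_mul_le _ _) ?_
      refine le_trans (natDegree_sub_le _ _) (max_le ?_ ?_)
      · exact le_trans (natDegree_sq_le i) (by omega)
      · exact le_trans (natDegree_C_mul_le _ _) (natDegree_K_le i)
    · exact natDegree_sum_le_of_forall_le _ _ fun i _ =>
        le_trans (natDegree_C_mul_le _ _) (natDegree_K_le i)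
  · intro j
    simp only [eval_sub, eval_add, eval_finset_sum, eval_mul, eval_C, eval_X]
    rw [Finset.sum_eq_single j
      (fun i _ hij => by rw [sq_eval_other (Ne.symm hij)]; ring)
      (fun h => absurd (mem_univ j) h)]
    rw [Finset.sum_eq_zero (fun i _ => ?_)]
    · rw [sq_eval_self hinj]; ring
    · by_cases hij : i = j
      · subst hij; ring
      · rw [sq_eval_other (fun h => hij (Eq.symm h))]; ring
  · intro j
    simp only [derivative_sub, derivative_add, derivative_sum, derivative_C_mul,
      eval_sub, eval_add, eval_finset_sum, eval_mul, eval_C]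
    rw [Finset.sum_eq_zero (fun i _ => ?_),
      Finset.sum_eq_single j
        (fun i _ hij => by rw [K_deriv_eval_other hinj (Ne.symm hij)]; ring)
        (fun h => absurd (mem_univ j) h),
      K_deriv_eval_self hinj]
    · ring
    · by_cases hij : i = j
      · subst hij
        rw [sq_deriv_eval_self hinj, K_deriv_eval_self hinj]
        ring
      · rw [sq_deriv_eval_other (fun h => hij (Eq.symm h)),
          K_deriv_eval_other hinj (fun h => hij (Eq.symm h))]
        ring

end GG


/-- **Quadrature characterisation of the stationary Gauss–Galerkin equations.** -/
theorem stationaryGG_iff_annihilates_generator {N : ℕ} (hN : 1 ≤ N)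
    (a b : ℝ → ℝ) (σ : ℝ) (x β : Fin N → ℝ) (hx : StrictMono x) :
    StationaryGG a b σ x β ↔
      ∀ φ : Polynomial ℝ, φ.natDegree ≤ 2 * N - 1 →
        ∑ k, β k * (a (x k) * (derivative φ).eval (x k) +
          σ ^ 2 / 2 * (b (x k)) ^ 2 * (derivative (derivative φ)).eval (x k)) = 0 := by
  have hinj : Function.Injective x := hx.injective
  constructor
  · intro hGG φ hdeg
    show GG.Lf a b σ x β φ = 0
    have hφ := GG.hermite hinj hN φ hdeg
    rw [hφ, GG.Lf_add, GG.Lf_sum, GG.Lf_sum]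
    have hK : ∀ i, GG.Lf a b σ x β ((X - C (x i)) * (GG.lag x i) ^ 2) = 0 := fun i => by
      rw [GG.Lf_K hinj]; exact ((hGG i).1).symm
    have hH : ∀ i, GG.Lf a b σ x β
        ((GG.lag x i) ^ 2 - C (2 * lpDiag x i) * ((X - C (x i)) * (GG.lag x i) ^ 2)) = 0 := by
      intro i
      rw [GG.Lf_sub, GG.Lf_Cmul, GG.Lf_sq hinj, GG.Lf_K hinj, ← (hGG i).1, ← (hGG i).2]
      ring
    have h1 : ∑ i, (eval (x i) φ) * GG.Lf a b σ x β
        ((GG.lag x i) ^ 2 - C (2 * lpDiag x i) * ((X - C (x i)) * (GG.lag x i) ^ 2)) = 0 :=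
      Finset.sum_eq_zero fun i _ => by rw [hH i, mul_zero]
    have h2 : ∑ i, (eval (x i) (derivative φ)) * GG.Lf a b σ x β
        ((X - C (x i)) * (GG.lag x i) ^ 2) = 0 :=
      Finset.sum_eq_zero fun i _ => by rw [hK i, mul_zero]
    rw [h1, h2, add_zero]
  · intro hq i
    refine ⟨?_, ?_⟩
    · have h := hq ((X - C (x i)) * (GG.lag x i) ^ 2) (GG.natDegree_K_le i)
      exact ((GG.Lf_K hinj a b σ β i).symm.trans h).symm
    · have h := hq ((GG.lag x i) ^ 2) (le_trans (GG.natDegree_sq_le i) (by omega))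
      exact ((GG.Lf_sq hinj a b σ β i).symm.trans h).symm
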